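/- Let f_n(x) be the characteristic polynomial of the n×n matrix B_n which is the adjacency matrix of the path graph with an added loop at each of the first n−1 vertices (i.e., diagonal entries 1 except the last which is 0, and 1s on the sub- and superdiagonal). Then the roots of f_n are exactly 1 + 2·cos(2kπ/(2n+1)) for k = 1, ..., n, and the spectral radius of B_n is 1 + 2·cos(2π/(2n+1)). -/

import Mathlib

open Polynomial Real Matrix


/-- The spectral radius of a square complex matrix. -/
noncomputable def specRad {m : Type*} [Fintype m] [DecidableEq m]
    (M : Matrix m m ℂ) : ℝ :=
  sSup {r : ℝ | ∃ μ ∈ spectrum ℂ M, r = ‖μ‖}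

/-- `B n` is the `n × n` adjacency matrix of the path graph with a loop added at each of
the first `n - 1` vertices: diagonal entries `1` except the last (which is `0`), and
`1` on the sub- and superdiagonal. -/
def BMat (n : ℕ) : Matrix (Fin n) (Fin n) ℝ :=
  Matrix.of fun i j =>
    if i = j ∧ (i : ℕ) + 1 < n then 1
    else if (i : ℕ) + 1 = (j : ℕ) ∨ (j : ℕ) + 1 = (i : ℕ) then 1 else 0

namespace Stmt7Aux

noncomputable def lam (n k : ℕ) : ℝ := 1 + 2 * Real.cos (2 * k * Real.pi / (2 * n + 1))

lemma theta_pos {n k : ℕ} (hk1 : 1 ≤ k) : 0 < 2 * (k:ℝ) * π / (2 * n + 1) := by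
  apply div_pos
  · have : (1:ℝ) ≤ (k:ℝ) := by exact_mod_cast hk1
    nlinarith [Real.pi_pos]
  · positivity

lemma theta_lt_pi {n k : ℕ} (hkn : k ≤ n) : 2 * (k:ℝ) * π / (2 * n + 1) < π := by
  rw [div_lt_iff₀ (by positivity)]
  have : (k:ℝ) ≤ (n:ℝ) := by exact_mod_cast hkn
  nlinarith [Real.pi_pos]

lemma sum_if_eq_zero {n : ℕ} (v : Fin n → ℝ) (P : Fin n → Prop) [DecidablePred P]
    (h : ∀ j, ¬ P j) : ∑ j : Fin n, (if P j then v j else 0) = 0 :=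
  Finset.sum_eq_zero fun j _ => if_neg (h j)

lemma sum_if_single {n : ℕ} (v : Fin n → ℝ) (P : Fin n → Prop) [DecidablePred P]
    (j0 : Fin n) (h0 : P j0) (hu : ∀ j, P j → j = j0) :
    ∑ j : Fin n, (if P j then v j else 0) = v j0 := by
  rw [Finset.sum_eq_single j0]
  · exact if_pos h0
  · intro j _ hj; exact if_neg (fun hpj => hj (hu j hpj))
  · intro h; exact absurd (Finset.mem_univ j0) h

lemma row_sum {n : ℕ} (v : Fin n → ℝ) (i : Fin n) :
    (BMat n).mulVec v i =
      (if (i:ℕ) + 1 < n then v i else 0)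
      + (if h : (i:ℕ) + 1 < n then v ⟨(i:ℕ)+1, h⟩ else 0)
      + (if h : 0 < (i:ℕ) then v ⟨(i:ℕ)-1, lt_of_le_of_lt (Nat.pred_le _) i.isLt⟩ else 0) := by
  have key : ∀ j : Fin n, BMat n i j * v j =
      (if (j:ℕ) = (i:ℕ) ∧ (i:ℕ)+1 < n then v j else 0)
      + (if (j:ℕ) = (i:ℕ)+1 then v j else 0)
      + (if (j:ℕ)+1 = (i:ℕ) then v j else 0) := by
    intro j
    simp only [BMat, Matrix.of_apply, Fin.ext_iff]
    split_ifs <;> first | ring1 | (exfalso; omega)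
  simp only [Matrix.mulVec, dotProduct]
  rw [Finset.sum_congr rfl (fun j _ => key j), Finset.sum_add_distrib, Finset.sum_add_distrib]
  congr 1
  · congr 1
    · by_cases h : (i:ℕ) + 1 < n
      · rw [if_pos h]
        exact sum_if_single v _ i ⟨rfl, h⟩ (fun j hj => Fin.ext hj.1)
      · rw [if_neg h]
        exact sum_if_eq_zero v _ (fun j hj => h hj.2)
    · by_cases h : (i:ℕ) + 1 < n
      · rw [dif_pos h]
        exact sum_if_single v _ ⟨(i:ℕ)+1, h⟩ rfl (fun j hj => Fin.ext (by simpa using hj))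
      · rw [dif_neg h]
        exact sum_if_eq_zero v _ (fun j hj => h (hj ▸ j.isLt))
  · by_cases h : 0 < (i:ℕ)
    · rw [dif_pos h]
      refine sum_if_single v _ _ ?_ (fun j hj => Fin.ext ?_)
      · simp only []; omega
      · simp only []; omega
    · rw [dif_neg h]
      exact sum_if_eq_zero v _ (fun j hj => by omega)

lemma charpoly_eval {m : Type*} [Fintype m] [DecidableEq m] {R : Type*} [CommRing R]
    (M : Matrix m m R) (r : R) :
    M.charpoly.eval r = (Matrix.scalar m r - M).det := by
  rw [Matrix.charpoly, _root_.eval_det, Matrix.matPolyEquiv_charmatrix, eval_sub, eval_X, eval_C]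

lemma isRoot_charpoly_of_eigen {m : Type*} [Fintype m] [DecidableEq m] {K : Type*} [Field K]
    (M : Matrix m m K) (μ : K) (v : m → K) (hv : v ≠ 0) (h : M.mulVec v = μ • v) :
    M.charpoly.IsRoot μ := by
  rw [Polynomial.IsRoot, charpoly_eval, ← Matrix.exists_mulVec_eq_zero_iff]
  refine ⟨v, hv, ?_⟩
  rw [Matrix.sub_mulVec, h, Matrix.scalar_apply]
  ext i
  simp [Matrix.mulVec_diagonal]

lemma mem_spectrum_iff_isRoot {m : Type*} [Fintype m] [DecidableEq m] {K : Type*} [Field K]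
    (M : Matrix m m K) (μ : K) :
    μ ∈ spectrum K M ↔ M.charpoly.IsRoot μ := by
  rw [spectrum.mem_iff, Matrix.isUnit_iff_isUnit_det, isUnit_iff_ne_zero, not_ne_iff,
    Polynomial.IsRoot, charpoly_eval]
  have : (algebraMap K (Matrix m m K)) μ = Matrix.scalar m μ := by
    ext i j
    simp [Matrix.algebraMap_matrix_apply, Matrix.scalar_apply, Matrix.diagonal_apply]
  rw [this]

lemma isRoot_lam {n k : ℕ} (hn : 1 ≤ n) (hk1 : 1 ≤ k) (hkn : k ≤ n) :
    (BMat n).charpoly.IsRoot (lam n k) := by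
  set t : ℝ := 2 * k * π / (2 * n + 1) with ht
  have htpos : 0 < t := theta_pos hk1
  have htlt : t < π := theta_lt_pi hkn
  have hsint : 0 < Real.sin t := Real.sin_pos_of_pos_of_lt_pi htpos htlt
  set v : Fin n → ℝ := fun i => Real.sin (((i:ℕ) + 1) * t) with hv
  have hlam : lam n k = 1 + 2 * Real.cos t := rfl
  have h2n1 : (2 * (n:ℝ) + 1) * t = 2 * k * π := by
    rw [ht]; field_simp
  have hs0 : Real.sin (2 * (k:ℝ) * π) = 0 := by
    have h' := Real.sin_nat_mul_pi (2 * k)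
    push_cast at h'
    ring_nf at h' ⊢
    exact h'
  have hc1 : Real.cos (2 * (k:ℝ) * π) = 1 := by
    have := Real.cos_nat_mul_two_pi k
    rw [show (k:ℝ) * (2 * π) = 2 * (k:ℝ) * π by ring] at this
    exact this
  apply isRoot_charpoly_of_eigen _ _ v
  · intro h0
    have h1 : v ⟨0, hn⟩ = 0 := by rw [h0]; rfl
    simp only [hv] at h1
    norm_num at h1
    exact absurd h1 (ne_of_gt hsint)
  · funext i
    rw [row_sum, Pi.smul_apply, smul_eq_mul, hlam]
    by_cases h1 : (i:ℕ) + 1 < n <;> by_cases h2 : 0 < (i:ℕ)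
    · -- interior row
      rw [if_pos h1, dif_pos h1, dif_pos h2]
      simp only [hv]
      rw [Nat.cast_sub (by omega : 1 ≤ (i:ℕ))]
      push_cast
      rw [show ((i:ℝ) + 1 + 1) * t = ((i:ℝ) + 1) * t + t by ring,
        show ((i:ℝ) - 1 + 1) * t = ((i:ℝ) + 1) * t - t by ring,
        Real.sin_add, Real.sin_sub]
      ring
    · -- first row, n ≥ 2
      have hm0 : (i:ℕ) = 0 := by omega
      rw [if_pos h1, dif_pos h1, dif_neg h2]
      simp only [hv, hm0]
      norm_num
      rw [Real.sin_two_mul]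
      ring
    · -- last row, n ≥ 2
      have hmn : (i:ℕ) = n - 1 := by omega
      have hn2 : 2 ≤ n := by omega
      rw [if_neg h1, dif_neg h1, dif_pos h2]
      simp only [hv, hmn]
      have c1 : ((n - 1 : ℕ) : ℝ) = (n:ℝ) - 1 := by
        rw [Nat.cast_sub hn]; norm_num
      have c2 : ((n - 1 - 1 : ℕ) : ℝ) = (n:ℝ) - 2 := by
        rw [show n - 1 - 1 = n - 2 from rfl, Nat.cast_sub hn2]; norm_num
      rw [c1, c2]
      have e1 : Real.sin ((n:ℝ) * t + t) = -Real.sin ((n:ℝ) * t) := by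
        rw [show (n:ℝ) * t + t = 2 * (k:ℝ) * π - (n:ℝ) * t by linarith [h2n1],
          Real.sin_sub, hs0, hc1]
        ring
      rw [Real.sin_add] at e1
      rw [show ((n:ℝ) - 2 + 1) * t = (n:ℝ) * t - t by ring,
        show ((n:ℝ) - 1 + 1) * t = (n:ℝ) * t by ring, Real.sin_sub]
      linear_combination -e1
    · -- n = 1
      have hn1 : n = 1 := by omega
      have hk : k = 1 := by omega
      rw [if_neg h1, dif_neg h1, dif_neg h2]
      have hlam0 : 1 + 2 * Real.cos t = 0 := by
        have htv : t = π - π / 3 := by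
          rw [ht, hn1, hk]; push_cast; ring
        rw [htv, Real.cos_pi_sub, Real.cos_pi_div_three]
        norm_num
      rw [hlam0]
      ring

lemma lam_injOn {n : ℕ} : ∀ k1 ∈ Finset.Icc 1 n, ∀ k2 ∈ Finset.Icc 1 n,
    lam n k1 = lam n k2 → k1 = k2 := by
  intro k1 hk1 k2 hk2 h
  rw [Finset.mem_Icc] at hk1 hk2
  have hc : Real.cos (2 * k1 * π / (2 * n + 1)) = Real.cos (2 * k2 * π / (2 * n + 1)) := by
    unfold lam at h; linarith
  have h1 : (2 * (k1:ℝ) * π / (2 * n + 1)) ∈ Set.Icc 0 π :=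
    ⟨le_of_lt (theta_pos hk1.1), le_of_lt (theta_lt_pi hk1.2)⟩
  have h2 : (2 * (k2:ℝ) * π / (2 * n + 1)) ∈ Set.Icc 0 π :=
    ⟨le_of_lt (theta_pos hk2.1), le_of_lt (theta_lt_pi hk2.2)⟩
  have := Real.injOn_cos h1 h2 hc
  have hden : (2 * (n:ℝ) + 1) ≠ 0 := by positivity
  field_simp at this
  exact_mod_cast this

lemma charpoly_eq {n : ℕ} (hn : 1 ≤ n) :
    (BMat n).charpoly = ∏ k ∈ Finset.Icc 1 n, (X - C (lam n k)) := by
  set p := (BMat n).charpoly with hp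
  have hmon : p.Monic := (BMat n).charpoly_monic
  have hdeg : p.natDegree = n := by
    rw [hp, Matrix.charpoly_natDegree_eq_dim, Fintype.card_fin]
  set m : Multiset ℝ := (Finset.Icc 1 n).val.map (lam n) with hm
  have hnodup : m.Nodup :=
    Multiset.Nodup.map_on (fun k1 h1 k2 h2 => lam_injOn k1 h1 k2 h2) (Finset.Icc 1 n).nodup
  have hsub : m ⊆ p.roots := by
    intro x hx
    obtain ⟨k, hk, rfl⟩ := Multiset.mem_map.1 hx
    rw [Polynomial.mem_roots']
    exact ⟨hmon.ne_zero,
      isRoot_lam hn (Finset.mem_Icc.1 hk).1 (Finset.mem_Icc.1 hk).2⟩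
  have hle : m ≤ p.roots := (Multiset.le_iff_subset hnodup).2 hsub
  have hcardm : Multiset.card m = n := by
    rw [hm, Multiset.card_map]; simp [Nat.card_Icc]
  have hcard : Multiset.card p.roots ≤ n := hdeg ▸ p.card_roots'
  have hroots : p.roots = m :=
    (Multiset.eq_of_le_of_card_le hle (by rw [hcardm]; exact hcard)).symm
  have hfact := Polynomial.prod_multiset_X_sub_C_of_monic_of_roots_card_eq hmon
    (by rw [hroots, hcardm, hdeg])
  rw [← hfact, hroots, hm, Multiset.map_map, Finset.prod]
  rfl

lemma lam_one_nonneg {n : ℕ} (hn : 1 ≤ n) : 0 ≤ lam n 1 := by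
  have h1 : (0:ℝ) ≤ 2 * (1:ℕ) * π / (2 * n + 1) := le_of_lt (theta_pos le_rfl)
  have h2 : 2 * ((1:ℕ):ℝ) * π / (2 * n + 1) ≤ 2 * π / 3 := by
    have hn' : (3:ℝ) ≤ 2 * n + 1 := by
      have : (1:ℝ) ≤ (n:ℝ) := by exact_mod_cast hn
      linarith
    rw [Nat.cast_one, mul_one]
    gcongr
  have h3 : Real.cos (2 * π / 3) ≤ Real.cos (2 * ((1:ℕ):ℝ) * π / (2 * n + 1)) :=
    Real.cos_le_cos_of_nonneg_of_le_pi h1 (by linarith [Real.pi_pos]) h2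
  have h4 : Real.cos (2 * π / 3) = -(1/2) := by
    rw [show (2 * π / 3 : ℝ) = π - π / 3 by ring, Real.cos_pi_sub, Real.cos_pi_div_three]
  unfold lam
  rw [h4] at h3
  linarith

lemma lam_one_ge_one {n : ℕ} (hn : 2 ≤ n) : 1 ≤ lam n 1 := by
  have h1 : (0:ℝ) ≤ 2 * ((1:ℕ):ℝ) * π / (2 * n + 1) := le_of_lt (theta_pos le_rfl)
  have hc : 0 ≤ Real.cos (2 * ((1:ℕ):ℝ) * π / (2 * n + 1)) := by
    apply Real.cos_nonneg_of_mem_Icc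
    constructor
    · linarith [Real.pi_pos]
    · rw [Nat.cast_one, mul_one]
      rw [div_le_iff₀ (by positivity)]
      have : (2:ℝ) ≤ (n:ℝ) := by exact_mod_cast hn
      nlinarith [Real.pi_pos]
  unfold lam
  linarith

lemma abs_lam_le {n k : ℕ} (hn : 1 ≤ n) (hk1 : 1 ≤ k) (hkn : k ≤ n) :
    |lam n k| ≤ lam n 1 := by
  have hθ1pos := theta_pos (n := n) (k := 1) le_rfl
  have hθkpos := theta_pos (n := n) (k := k) hk1
  have hθklt := theta_lt_pi (n := n) (k := k) hkn
  have hmono : 2 * ((1:ℕ):ℝ) * π / (2 * n + 1) ≤ 2 * (k:ℝ) * π / (2 * n + 1) := by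
    gcongr
  have hA : lam n k ≤ lam n 1 := by
    have := Real.cos_le_cos_of_nonneg_of_le_pi (le_of_lt hθ1pos) (le_of_lt hθklt) hmono
    unfold lam
    linarith
  have hB : -(lam n 1) ≤ lam n k := by
    rcases eq_or_lt_of_le hn with h1 | h2
    · -- n = 1, so k = 1
      have : k = 1 := by omega
      subst this
      have := lam_one_nonneg hn
      linarith
    · have hn2 : 2 ≤ n := h2
      have hcos := Real.neg_one_le_cos (x := 2 * (k:ℝ) * π / (2 * n + 1))
      have := lam_one_ge_one hn2
      unfold lam at *
      linarith
  rw [abs_le]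
  exact ⟨by linarith, hA⟩

end Stmt7Aux

/-- The roots of the characteristic polynomial of `B n` are exactly
`1 + 2 cos (2kπ/(2n+1))` for `k = 1, …, n`, and the spectral radius of `B n` is
`1 + 2 cos (2π/(2n+1))`. -/
theorem stmt_7 {n : ℕ} (hn : 1 ≤ n) :
    ({x : ℝ | (BMat n).charpoly.IsRoot x} =
      {x : ℝ | ∃ k : ℕ, 1 ≤ k ∧ k ≤ n ∧
        x = 1 + 2 * Real.cos (2 * k * Real.pi / (2 * n + 1))}) ∧
    specRad ((BMat n).map (Complex.ofReal : ℝ → ℂ)) =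
      1 + 2 * Real.cos (2 * Real.pi / (2 * n + 1)) := by
  open Stmt7Aux in
  constructor
  · ext x
    simp only [Set.mem_setOf_eq]
    constructor
    · intro hx
      rw [charpoly_eq hn, Polynomial.IsRoot, Polynomial.eval_prod,
        Finset.prod_eq_zero_iff] at hx
      obtain ⟨k, hk, h0⟩ := hx
      rw [Finset.mem_Icc] at hk
      refine ⟨k, hk.1, hk.2, ?_⟩
      have : x - lam n k = 0 := by simpa using h0
      have hx' : x = lam n k := by linarith
      exact hx'
    · rintro ⟨k, hk1, hkn, rfl⟩
      exact isRoot_lam hn hk1 hkn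
  · have hlam1 : lam n 1 = 1 + 2 * Real.cos (2 * Real.pi / (2 * n + 1)) := by
      unfold lam
      norm_num
    have hcp : ((BMat n).map (Complex.ofReal : ℝ → ℂ)).charpoly
        = ∏ k ∈ Finset.Icc 1 n, (X - C ((lam n k : ℝ) : ℂ)) := by
      have he : ((BMat n).map (Complex.ofReal : ℝ → ℂ))
          = (BMat n).map (Complex.ofRealHom : ℝ →+* ℂ) := rfl
      rw [he, Matrix.charpoly_map, charpoly_eq hn, Polynomial.map_prod]
      simp
    have hspec : ∀ μ : ℂ, μ ∈ spectrum ℂ ((BMat n).map (Complex.ofReal : ℝ → ℂ))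
        ↔ ∃ k ∈ Finset.Icc 1 n, μ = ((lam n k : ℝ) : ℂ) := by
      intro μ
      rw [mem_spectrum_iff_isRoot, hcp, Polynomial.IsRoot, Polynomial.eval_prod,
        Finset.prod_eq_zero_iff]
      constructor
      · rintro ⟨k, hk, h0⟩
        refine ⟨k, hk, ?_⟩
        have : μ - ((lam n k : ℝ) : ℂ) = 0 := by simpa using h0
        linear_combination this
      · rintro ⟨k, hk, rfl⟩
        exact ⟨k, hk, by simp⟩
    rw [specRad, ← hlam1]
    apply IsGreatest.csSup_eq
    constructor
    · refine ⟨((lam n 1 : ℝ) : ℂ), (hspec _).2 ⟨1, by simp [hn], rfl⟩, ?_⟩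
      rw [Complex.norm_real, Real.norm_eq_abs, abs_of_nonneg (lam_one_nonneg hn)]
    · rintro r ⟨μ, hμ, rfl⟩
      obtain ⟨k, hk, rfl⟩ := (hspec μ).1 hμ
      rw [Finset.mem_Icc] at hk
      rw [Complex.norm_real, Real.norm_eq_abs]
      exact abs_lam_le hn hk.1 hk.2
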